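/- Let n ≥ 1 and let S ⊆ ℝⁿ be a Lebesgue-measurable set with volume V = vol(S) ∈ (0, ∞). Then ∫_S ‖x‖² dx ≥ ∫_B ‖x‖² dx, where B is the closed Euclidean ball centered at the origin with vol(B) = V; explicitly, ∫_S ‖x‖² dx ≥ (n/(n+2)) · (Γ(n/2 + 1))^{2/n} · V^{(n+2)/n} / π. -/

import Mathlib

open MeasureTheory Real
open scoped ENNReal

lemma cmp_lemma {n : ℕ} (S : Set (EuclideanSpace ℝ (Fin n))) (hS : MeasurableSet S)
    (V : ℝ) (hvol : volume S = ENNReal.ofReal V)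
    (r : ℝ) (hr : 0 < r)
    (hB : volume (Metric.closedBall (0 : EuclideanSpace ℝ (Fin n)) r) = ENNReal.ofReal V) :
    ∫⁻ x in Metric.closedBall (0 : EuclideanSpace ℝ (Fin n)) r,
        ENNReal.ofReal (‖x‖ ^ 2) ≤ ∫⁻ x in S, ENNReal.ofReal (‖x‖ ^ 2) := by
  set B := Metric.closedBall (0 : EuclideanSpace ℝ (Fin n)) r with hBdef
  have hBm : MeasurableSet B := measurableSet_closedBall
  set f : EuclideanSpace ℝ (Fin n) → ℝ≥0∞ := fun x => ENNReal.ofReal (‖x‖ ^ 2) with hf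
  have hfin : volume (S ∩ B) ≠ ⊤ := by
    exact ne_top_of_le_ne_top (by simp) (le_trans (measure_mono Set.inter_subset_left) hvol.le)
  have hmeq : volume (S \ B) = volume (B \ S) := by
    have h1 : volume (S ∩ B) + volume (S \ B) = ENNReal.ofReal V := by
      rw [← hvol]; exact measure_inter_add_diff S hBm
    have h2 : volume (S ∩ B) + volume (B \ S) = ENNReal.ofReal V := by
      rw [← hB, Set.inter_comm]; exact measure_inter_add_diff B hS
    have := h1.trans h2.symm
    exact (ENNReal.add_right_inj hfin).mp this
  have hsplitS : ∫⁻ x in S, f x = (∫⁻ x in S ∩ B, f x) + ∫⁻ x in S \ B, f x := by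
    rw [← lintegral_inter_add_diff (B := B) _ S hBm]
  have hsplitB : ∫⁻ x in B, f x = (∫⁻ x in S ∩ B, f x) + ∫⁻ x in B \ S, f x := by
    rw [← lintegral_inter_add_diff (B := S) _ B hS, Set.inter_comm]
  have hub : ∫⁻ x in B \ S, f x ≤ ENNReal.ofReal (r ^ 2) * volume (B \ S) := by
    rw [← setLIntegral_const]
    refine setLIntegral_mono measurable_const fun x hx => ?_
    have : ‖x‖ ≤ r := by
      simpa [hBdef, mem_closedBall_zero_iff] using hx.1
    exact ENNReal.ofReal_le_ofReal (by nlinarith [norm_nonneg x])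
  have hlb : ENNReal.ofReal (r ^ 2) * volume (S \ B) ≤ ∫⁻ x in S \ B, f x := by
    rw [← setLIntegral_const]
    refine setLIntegral_mono (by fun_prop) fun x hx => ?_
    have : r ≤ ‖x‖ := by
      have := hx.2
      simp only [hBdef, Metric.mem_closedBall, dist_zero_right, not_le] at this
      exact this.le
    exact ENNReal.ofReal_le_ofReal (by nlinarith [norm_nonneg x, hr.le])
  calc ∫⁻ x in B, f x = (∫⁻ x in S ∩ B, f x) + ∫⁻ x in B \ S, f x := hsplitB
    _ ≤ (∫⁻ x in S ∩ B, f x) + ENNReal.ofReal (r ^ 2) * volume (B \ S) := by gcongr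
    _ = (∫⁻ x in S ∩ B, f x) + ENNReal.ofReal (r ^ 2) * volume (S \ B) := by rw [hmeq]
    _ ≤ (∫⁻ x in S ∩ B, f x) + ∫⁻ x in S \ B, f x := by gcongr
    _ = ∫⁻ x in S, f x := hsplitS.symm

lemma ball_moment {n : ℕ} (hn : 1 ≤ n) (r : ℝ) (hr : 0 < r) :
    ∫⁻ x in Metric.closedBall (0 : EuclideanSpace ℝ (Fin n)) r, ENNReal.ofReal (‖x‖ ^ 2)
      = ENNReal.ofReal ((n : ℝ) * (Real.sqrt π ^ n / Real.Gamma ((n : ℝ) / 2 + 1)) *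
          (r ^ (n + 2) / ((n : ℝ) + 2))) := by
  haveI : Nonempty (Fin n) := ⟨⟨0, hn⟩⟩
  haveI : Nontrivial (EuclideanSpace ℝ (Fin n)) :=
    Module.nontrivial_of_finrank_pos (R := ℝ)
      (by rw [finrank_euclideanSpace_fin]; omega)
  have hInt : IntegrableOn (fun x : EuclideanSpace ℝ (Fin n) => ‖x‖ ^ 2)
      (Metric.closedBall 0 r) volume :=
    (continuous_norm.pow 2).continuousOn.integrableOn_compact (isCompact_closedBall _ _)
  rw [← ofReal_integral_eq_lintegral_ofReal hInt (ae_of_all _ fun x => sq_nonneg _)]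
  congr 1
  have h1 : ∫ x in Metric.closedBall (0 : EuclideanSpace ℝ (Fin n)) r, ‖x‖ ^ 2
      = ∫ x : EuclideanSpace ℝ (Fin n), Set.indicator (Set.Iic r) (fun t => t ^ 2) ‖x‖ := by
    rw [← integral_indicator (measurableSet_closedBall)]
    congr 1; ext x
    by_cases h : ‖x‖ ≤ r <;>
      simp [Set.indicator, mem_closedBall_zero_iff, h]
  rw [h1, integral_fun_norm_addHaar volume (Set.indicator (Set.Iic r) (fun t => t ^ 2))]
  have hdim : Module.finrank ℝ (EuclideanSpace ℝ (Fin n)) = n := finrank_euclideanSpace_fin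
  rw [hdim]
  have hω : (volume (Metric.ball (0 : EuclideanSpace ℝ (Fin n)) 1)).toReal
      = Real.sqrt π ^ n / Real.Gamma ((n : ℝ) / 2 + 1) := by
    rw [EuclideanSpace.volume_ball]
    have hg : (0:ℝ) < Real.Gamma ((n : ℝ) / 2 + 1) :=
      Real.Gamma_pos_of_pos (by positivity)
    simp only [Fintype.card_fin]
    rw [ENNReal.ofReal_one, one_pow, one_mul,
      ENNReal.toReal_ofReal (div_nonneg (by positivity) hg.le)]
  rw [measureReal_def, hω]
  have h2 : ∫ y in Set.Ioi (0 : ℝ), y ^ (n - 1) • Set.indicator (Set.Iic r) (fun t => t ^ 2) y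
      = r ^ (n + 2) / ((n : ℝ) + 2) := by
    have e1 : ∀ y : ℝ, y ^ (n - 1) • Set.indicator (Set.Iic r) (fun t => t ^ 2) y
        = Set.indicator (Set.Iic r) (fun t => t ^ (n + 1)) y := by
      intro y
      by_cases h : y ∈ Set.Iic r
      · simp only [Set.indicator_of_mem h, smul_eq_mul]
        rw [← pow_add]
        congr 1; omega
      · simp [Set.indicator_of_notMem h]
    simp_rw [e1]
    rw [setIntegral_indicator measurableSet_Iic, Set.Ioi_inter_Iic,
      ← intervalIntegral.integral_of_le hr.le, integral_pow]
    norm_num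
    congr 1
    push_cast
    ring
  rw [h2, nsmul_eq_mul, smul_eq_mul, mul_assoc]

/-- among measurable sets `S ⊆ ℝⁿ` of volume `V`, the origin-centered
Euclidean ball minimizes `∫_S ‖x‖² dx`; explicitly,
`∫_S ‖x‖² dx ≥ (n/(n+2))·Γ(n/2+1)^{2/n}·V^{(n+2)/n}/π`. -/
theorem ball_minimizes_second_moment {n : ℕ} (hn : 1 ≤ n)
    (S : Set (EuclideanSpace ℝ (Fin n))) (hS : MeasurableSet S)
    (V : ℝ) (hV : 0 < V) (hvol : volume S = ENNReal.ofReal V) :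
    (∀ r : ℝ, 0 < r →
      volume (Metric.closedBall (0 : EuclideanSpace ℝ (Fin n)) r) = ENNReal.ofReal V →
      ∫⁻ x in Metric.closedBall (0 : EuclideanSpace ℝ (Fin n)) r,
          ENNReal.ofReal (‖x‖ ^ 2) ≤ ∫⁻ x in S, ENNReal.ofReal (‖x‖ ^ 2)) ∧
    ENNReal.ofReal (((n : ℝ) / ((n : ℝ) + 2)) *
        Real.Gamma ((n : ℝ) / 2 + 1) ^ ((2 : ℝ) / n) * V ^ (((n : ℝ) + 2) / n) / π) ≤
      ∫⁻ x in S, ENNReal.ofReal (‖x‖ ^ 2) := by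
  refine ⟨fun r hr hB => cmp_lemma S hS V hvol r hr hB, ?_⟩
  haveI : Nonempty (Fin n) := ⟨⟨0, hn⟩⟩
  have hn0 : (n : ℝ) ≠ 0 := Nat.cast_ne_zero.mpr (by omega)
  have hΓ : (0:ℝ) < Real.Gamma ((n : ℝ) / 2 + 1) := Real.Gamma_pos_of_pos (by positivity)
  have hsp : (0:ℝ) < Real.sqrt π ^ n := by positivity
  set Γv := Real.Gamma ((n : ℝ) / 2 + 1) with hΓdef
  set sp := Real.sqrt π ^ n with hspdef
  set a := V * Γv / sp with ha_def
  have ha : 0 < a := by positivity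
  set r := a ^ ((1 : ℝ) / n) with hr_def
  have hr : 0 < r := Real.rpow_pos_of_pos ha _
  have hrn : r ^ n = a := by
    rw [hr_def, ← Real.rpow_natCast (a ^ ((1:ℝ)/n)) n, ← Real.rpow_mul ha.le,
      one_div_mul_cancel hn0, Real.rpow_one]
  have hr2 : r ^ 2 = a ^ ((2 : ℝ) / n) := by
    rw [hr_def, ← Real.rpow_natCast (a ^ ((1:ℝ)/n)) 2, ← Real.rpow_mul ha.le]
    congr 1
    push_cast
    ring
  have hsp2n : (sp : ℝ) ^ ((2:ℝ)/n) = π := by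
    rw [show sp = Real.sqrt π ^ n from rfl, ← Real.rpow_natCast (Real.sqrt π) n,
      ← Real.rpow_mul (Real.sqrt_nonneg π), mul_div_cancel₀ _ hn0,
      Real.rpow_two, Real.sq_sqrt pi_nonneg]
  have hmom := ball_moment hn r hr
  rw [← hspdef, ← hΓdef] at hmom
  clear_value Γv sp a r
  have hvolB : volume (Metric.closedBall (0 : EuclideanSpace ℝ (Fin n)) r)
      = ENNReal.ofReal V := by
    rw [EuclideanSpace.volume_closedBall, Fintype.card_fin, ← hspdef, ← hΓdef,
      ← ENNReal.ofReal_pow hr.le, ← ENNReal.ofReal_mul (by positivity), hrn]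
    congr 1
    rw [ha_def]
    field_simp
  have ha2n : a ^ ((2:ℝ)/n) = V ^ ((2:ℝ)/n) * Γv ^ ((2:ℝ)/n) / π := by
    rw [ha_def, Real.div_rpow (by positivity) hsp.le, Real.mul_rpow hV.le hΓ.le, hsp2n]
  have hVexp : V ^ (((n:ℝ) + 2) / n) = V ^ ((2:ℝ)/n) * V := by
    rw [show ((n:ℝ)+2)/n = 2/n + 1 by field_simp; ring, Real.rpow_add hV, Real.rpow_one]
  have hkey : (n : ℝ) * (sp / Γv) * (r ^ (n + 2) / ((n : ℝ) + 2))
      = ((n : ℝ) / ((n : ℝ) + 2)) * Γv ^ ((2 : ℝ) / n) * V ^ (((n : ℝ) + 2) / n) / π := by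
    have : r ^ (n + 2) = a * a ^ ((2:ℝ)/n) := by
      rw [pow_add, hrn, hr2]
    rw [this, hVexp, ha2n, ha_def]
    have hπ : (0:ℝ) < π := pi_pos
    field_simp
  calc ENNReal.ofReal (((n : ℝ) / ((n : ℝ) + 2)) * Γv ^ ((2 : ℝ) / n) * V ^ (((n : ℝ) + 2) / n) / π)
      = ∫⁻ x in Metric.closedBall (0 : EuclideanSpace ℝ (Fin n)) r,
          ENNReal.ofReal (‖x‖ ^ 2) := by rw [hmom, hkey]
    _ ≤ ∫⁻ x in S, ENNReal.ofReal (‖x‖ ^ 2) := cmp_lemma S hS V hvol r hr hvolB
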